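/- Let n ≥ 3 and P = ℚ[X₁,…,X_{2n}]. Let 𝔟⁺ be the ideal of P generated by all Xᵢ² (i = 1,…,2n) and all e_{n−1}(Xᵢ : i ∈ {1} ∪ T) for subsets T ⊆ {2,…,2n} with |T| = n−1, where e_{n−1} is the elementary symmetric polynomial of degree n−1. Then for every a₁,…,a_{2n} ∈ ℚ, one has (a₁X₁ + ⋯ + a_{2n}X_{2n})^{n−1} ∈ 𝔟⁺ if and only if (∏_{k∈K} a_k)·(a₁ − ∑_{j∈{2,…,2n}∖K} a_j) = 0 for every subset K ⊆ {2,…,2n} with |K| = n−2. -/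

import Mathlib

open MvPolynomial Finset

noncomputable section

/-- e_j(Xᵢ : i ∈ I), the elementary symmetric polynomial in the variables indexed by I. -/
def esF {N : ℕ} (I : Finset (Fin N)) (j : ℕ) : MvPolynomial (Fin N) ℚ :=
  ∑ J ∈ powersetCard j I, ∏ i ∈ J, X i

namespace Stmt19Aux

open Nat

variable {σ : Type*} [DecidableEq σ]

/-- The squarefree exponent supported on `S`. -/
def mexp (S : Finset σ) : σ →₀ ℕ := ∑ i ∈ S, Finsupp.single i 1

lemma mexp_apply (S : Finset σ) (i : σ) : mexp S i = if i ∈ S then 1 else 0 := by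
  classical
  simp only [mexp, Finsupp.finset_sum_apply, Finsupp.single_apply]
  simp [Finset.sum_ite_eq]

lemma mem_iff_mexp (S : Finset σ) (i : σ) : i ∈ S ↔ mexp S i = 1 := by
  rw [mexp_apply]; split <;> simp_all

lemma mexp_inj (S T : Finset σ) (h : mexp S = mexp T) : S = T := by
  ext i
  rw [mem_iff_mexp, mem_iff_mexp, h]

lemma mexp_le_iff (J D : Finset σ) : mexp J ≤ mexp D ↔ J ⊆ D := by
  constructor
  · intro h i hi
    have := h i
    rw [mexp_apply, mexp_apply, if_pos hi] at this
    by_contra hc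
    rw [if_neg hc] at this
    omega
  · intro h i
    rw [mexp_apply, mexp_apply]
    by_cases hi : i ∈ J
    · rw [if_pos hi, if_pos (h hi)]
    · simp [hi]

lemma prod_X_mexp (S : Finset σ) : (∏ i ∈ S, X i : MvPolynomial σ ℚ) = monomial (mexp S) 1 := by
  classical
  induction S using Finset.induction_on with
  | empty => simp [mexp]
  | @insert i S hi ih =>
      rw [Finset.prod_insert hi, ih, X, monomial_mul, one_mul]
      congr 1
      rw [mexp, mexp, Finset.sum_insert hi]

lemma coeff_prod_X (S D : Finset σ) :
    coeff (mexp D) (∏ i ∈ S, X i : MvPolynomial σ ℚ) = if S = D then 1 else 0 := by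
  rw [prod_X_mexp, coeff_monomial]
  by_cases h : S = D
  · simp [h]
  · rw [if_neg h, if_neg (fun hc => h (mexp_inj _ _ hc))]

/-- The ideal generated by the squares of the variables. -/
def Isq (σ : Type*) : Ideal (MvPolynomial σ ℚ) :=
  Ideal.span {f : MvPolynomial σ ℚ | ∃ i, f = X i ^ 2}

variable [Fintype σ]

lemma key (a : σ → ℚ) (m : ℕ) :
    (∑ i, C (a i) * X i) ^ m -
      C (m ! : ℚ) * ∑ S ∈ powersetCard m univ, C (∏ i ∈ S, a i) * ∏ i ∈ S, X i ∈ Isq σ := by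
  induction m with
  | zero => simp
  | succ m ih =>
      set L : MvPolynomial σ ℚ := ∑ i, C (a i) * X i with hL
      set Sm : MvPolynomial σ ℚ :=
        ∑ S ∈ powersetCard m univ, C (∏ i ∈ S, a i) * ∏ i ∈ S, X i with hSm
      set Sm1 : MvPolynomial σ ℚ :=
        ∑ S ∈ powersetCard (m + 1) univ, C (∏ i ∈ S, a i) * ∏ i ∈ S, X i with hSm1
      set Bad : MvPolynomial σ ℚ :=
        ∑ S ∈ powersetCard m univ, ∑ i ∈ S,
          (C (a i * ∏ j ∈ S, a j)) * (X i * ∏ j ∈ S, X j) with hBad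
      set Good : MvPolynomial σ ℚ :=
        ∑ S ∈ powersetCard m univ, ∑ i ∈ univ \ S,
          (C (a i * ∏ j ∈ S, a j)) * (X i * ∏ j ∈ S, X j) with hGood
      have hsplit : L * Sm = Bad + Good := by
        rw [hSm, Finset.mul_sum, hBad, hGood, ← Finset.sum_add_distrib]
        refine Finset.sum_congr rfl fun S _ => ?_
        rw [hL, Finset.sum_mul]
        rw [← Finset.sum_sdiff (Finset.subset_univ S) (f := fun i =>
          (C (a i) * X i) * (C (∏ j ∈ S, a j) * ∏ j ∈ S, X j)), add_comm]
        congr 1 <;> exact Finset.sum_congr rfl fun i _ => by push_cast [map_mul]; ring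
      have hBadMem : Bad ∈ Isq σ := by
        refine Ideal.sum_mem _ fun S _ => Ideal.sum_mem _ fun i hi => ?_
        have h1 : X i * ∏ j ∈ S, X j = (X i ^ 2 : MvPolynomial σ ℚ) * ∏ j ∈ S.erase i, X j := by
          rw [← Finset.mul_prod_erase S _ hi]; ring
        rw [h1]
        have hX : (X i ^ 2 : MvPolynomial σ ℚ) ∈ Isq σ := Ideal.subset_span ⟨i, rfl⟩
        have hmem := Ideal.mul_mem_left (Isq σ) (C (a i * ∏ j ∈ S, a j) * ∏ j ∈ S.erase i, X j) hX
        have heq : (C (a i * ∏ j ∈ S, a j) * ∏ j ∈ S.erase i, X j) * X i ^ 2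
            = C (a i * ∏ j ∈ S, a j) * (X i ^ 2 * ∏ j ∈ S.erase i, X j) := by ring
        rw [heq] at hmem
        exact hmem
      have hGoodEq : Good = (m + 1) • Sm1 := by
        have h1 : Good = ∑ S ∈ powersetCard m univ, ∑ i ∈ univ \ S,
            (C (∏ j ∈ insert i S, a j)) * (∏ j ∈ insert i S, X j) := by
          refine Finset.sum_congr rfl fun S _ => Finset.sum_congr rfl fun i hi => ?_
          have hiS : i ∉ S := (Finset.mem_sdiff.mp hi).2
          rw [Finset.prod_insert hiS, Finset.prod_insert hiS, map_mul]
        have h2 : Good = ∑ S ∈ powersetCard (m + 1) univ, ∑ i ∈ S,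
            (C (∏ j ∈ S, a j)) * (∏ j ∈ S, X j) := by
          rw [h1, Finset.sum_sigma', Finset.sum_sigma']
          refine Finset.sum_nbij' (fun p => ⟨insert p.2 p.1, p.2⟩) (fun p => ⟨p.1.erase p.2, p.2⟩)
            ?_ ?_ ?_ ?_ ?_
          · rintro ⟨S, i⟩ hp
            simp only [Finset.mem_sigma, Finset.mem_powersetCard_univ] at hp ⊢
            have hiS : i ∉ S := (Finset.mem_sdiff.mp hp.2).2
            exact ⟨by rw [Finset.card_insert_of_notMem hiS, hp.1], Finset.mem_insert_self _ _⟩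
          · rintro ⟨S, i⟩ hp
            simp only [Finset.mem_sigma, Finset.mem_powersetCard_univ] at hp ⊢
            refine ⟨by rw [Finset.card_erase_of_mem hp.2, hp.1]; rfl, ?_⟩
            exact Finset.mem_sdiff.mpr ⟨Finset.mem_univ _, Finset.notMem_erase _ _⟩
          · rintro ⟨S, i⟩ hp
            simp only [Finset.mem_sigma] at hp
            have hiS : i ∉ S := (Finset.mem_sdiff.mp hp.2).2
            simp [Finset.erase_insert hiS]
          · rintro ⟨S, i⟩ hp
            simp only [Finset.mem_sigma] at hp
            simp [Finset.insert_erase hp.2]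
          · rintro ⟨S, i⟩ hp
            rfl
        rw [h2, hSm1, Finset.smul_sum]
        refine Finset.sum_congr rfl fun S hS => ?_
        rw [Finset.sum_const, Finset.mem_powersetCard_univ.mp hS]
      have hmain : L ^ (m + 1) - C ((m + 1)! : ℚ) * Sm1 =
          L * (L ^ m - C (m ! : ℚ) * Sm) + C (m ! : ℚ) * Bad := by
        have hfact : (C (((m + 1)! : ℕ) : ℚ) : MvPolynomial σ ℚ)
            = C ((m ! : ℕ) : ℚ) * C ((m + 1 : ℕ) : ℚ) := by
          rw [← map_mul]
          congr 1
          push_cast [Nat.factorial_succ]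
          ring
        have hnsmul : ((m + 1) • Sm1 : MvPolynomial σ ℚ) = C ((m + 1 : ℕ) : ℚ) * Sm1 := by
          rw [nsmul_eq_mul, map_natCast]
        have hthis : C (m ! : ℚ) * (L * Sm) = C (m ! : ℚ) * Bad + C ((m + 1)! : ℚ) * Sm1 := by
          rw [hsplit, mul_add, hGoodEq, hnsmul, hfact]
          ring
        calc L ^ (m + 1) - C ((m + 1)! : ℚ) * Sm1
            = L * (L ^ m - C (m ! : ℚ) * Sm) +
              (C (m ! : ℚ) * (L * Sm) - C ((m + 1)! : ℚ) * Sm1) := by ring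
          _ = L * (L ^ m - C (m ! : ℚ) * Sm) + C (m ! : ℚ) * Bad := by rw [hthis]; ring
      rw [hmain]
      exact Ideal.add_mem _ (Ideal.mul_mem_left _ _ ih) (Ideal.mul_mem_left _ _ hBadMem)

-- (A) squares kill squarefree coefficients
lemma coeff_mul_Xsq (p : MvPolynomial σ ℚ) (i : σ) (D : Finset σ) :
    coeff (mexp D) (p * X i ^ 2) = 0 := by
  rw [coeff_mul]
  refine Finset.sum_eq_zero fun x hx => ?_
  rw [Finset.HasAntidiagonal.mem_antidiagonal] at hx
  rw [coeff_X_pow]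
  by_cases h : Finsupp.single i 2 = x.2
  · exfalso
    have h1 : (x.1 + x.2) i = mexp D i := by rw [hx]
    have h2 : x.2 i = 2 := by rw [← h]; simp
    rw [Finsupp.add_apply, mexp_apply, h2] at h1
    split at h1 <;> omega
  · rw [if_neg h, mul_zero]

-- coefficient of a squarefree monomial in an elementary-symmetric-type sum
lemma coeff_esum (I : Finset σ) (j : ℕ) (D : Finset σ) :
    coeff (mexp D) (∑ J ∈ powersetCard j I, ∏ i ∈ J, X i : MvPolynomial σ ℚ)
      = if D ∈ powersetCard j I then 1 else 0 := by
  rw [coeff_sum]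
  rw [Finset.sum_congr rfl fun J _ => coeff_prod_X J D]
  exact Finset.sum_ite_eq' _ _ _

-- (B) multiplication by arbitrary p only sees the constant coefficient
lemma coeff_mul_esum (p : MvPolynomial σ ℚ) (I : Finset σ) (j : ℕ) (D : Finset σ)
    (hD : D.card = j) :
    coeff (mexp D) (p * ∑ J ∈ powersetCard j I, ∏ i ∈ J, X i)
      = coeff 0 p * (if D ∈ powersetCard j I then 1 else 0) := by
  rw [coeff_mul]
  rw [Finset.sum_eq_single (0, mexp D)]
  · rw [coeff_esum]
  · rintro ⟨c, e⟩ hce hne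
    rw [Finset.HasAntidiagonal.mem_antidiagonal] at hce
    by_cases he : coeff e (∑ J ∈ powersetCard j I, ∏ i ∈ J, X i : MvPolynomial σ ℚ) = 0
    · simp [he]
    · exfalso
      have hex : ∃ J ∈ powersetCard j I, e = mexp J := by
        by_contra hno
        push_neg at hno
        apply he
        rw [coeff_sum]
        refine Finset.sum_eq_zero fun J hJ => ?_
        rw [prod_X_mexp, coeff_monomial, if_neg]
        exact fun hc => hno J hJ hc.symm
      obtain ⟨J, hJ, rfl⟩ := hex
      have hle : mexp J ≤ mexp D := by
        rw [← hce]
        exact le_add_self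
      have hJD : J ⊆ D := (mexp_le_iff _ _).mp hle
      have hJcard : J.card = j := (Finset.mem_powersetCard.mp hJ).2
      have hJDeq : J = D := Finset.eq_of_subset_of_card_le hJD (by omega)
      subst hJDeq
      have hc0 : c = 0 := by
        have h' : c + mexp J = mexp J := hce
        exact add_eq_right.mp h'
      exact hne (by rw [Prod.mk.injEq]; exact ⟨hc0, rfl⟩)
  · intro h
    exact absurd (Finset.HasAntidiagonal.mem_antidiagonal.mpr (zero_add _)) h

-- coefficient of a squarefree monomial in a sum of squarefree monomials
lemma coeff_sigma (a : σ → ℚ) (s : Finset (Finset σ)) (D : Finset σ) :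
    coeff (mexp D) (∑ S ∈ s, C (∏ i ∈ S, a i) * ∏ i ∈ S, X i)
      = if D ∈ s then ∏ i ∈ D, a i else 0 := by
  rw [coeff_sum]
  have h : ∀ S ∈ s, coeff (mexp D) (C (∏ i ∈ S, a i) * ∏ i ∈ S, X i)
      = if S = D then ∏ i ∈ D, a i else 0 := by
    intro S _
    rw [coeff_C_mul, coeff_prod_X]
    by_cases h : S = D
    · simp [h]
    · simp [h]
  rw [Finset.sum_congr rfl h]
  exact Finset.sum_ite_eq' _ _ _

lemma subset_insert_iff' {K T : Finset σ} {i0 : σ} (hK : i0 ∉ K) :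
    K ⊆ insert i0 T ↔ K ⊆ T := by
  constructor
  · intro h x hx
    rcases Finset.mem_insert.mp (h hx) with h' | h'
    · exact absurd (h' ▸ hx) hK
    · exact h'
  · exact fun h => h.trans (Finset.subset_insert _ _)

/-- The test functional. -/
def Phi (i0 : σ) (K : Finset σ) (f : MvPolynomial σ ℚ) : ℚ :=
  coeff (mexp (insert i0 K)) f - ∑ j ∈ univ \ insert i0 K, coeff (mexp (insert j K)) f

lemma Phi_zero (i0 : σ) (K : Finset σ) : Phi i0 K 0 = 0 := by simp [Phi]

lemma Phi_add (i0 : σ) (K : Finset σ) (f g : MvPolynomial σ ℚ) :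
    Phi i0 K (f + g) = Phi i0 K f + Phi i0 K g := by
  simp only [Phi, coeff_add, Finset.sum_add_distrib]
  ring

lemma Phi_mul_Xsq (i0 : σ) (K : Finset σ) (q : MvPolynomial σ ℚ) (i : σ) :
    Phi i0 K (q * X i ^ 2) = 0 := by
  simp [Phi, coeff_mul_Xsq]

lemma Phi_mul_esum (i0 : σ) (K : Finset σ) (q : MvPolynomial σ ℚ) (T : Finset σ)
    (hi0K : i0 ∉ K) (hi0T : i0 ∉ T) (hcard : K.card + 1 = T.card) :
    Phi i0 K (q * ∑ J ∈ powersetCard T.card (insert i0 T), ∏ i ∈ J, X i) = 0 := by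
  have hcK : (insert i0 K).card = T.card := by
    rw [Finset.card_insert_of_notMem hi0K]; exact hcard
  rw [Phi, coeff_mul_esum _ _ _ _ hcK]
  have hstep : ∀ j ∈ univ \ insert i0 K,
      coeff (mexp (insert j K)) (q * ∑ J ∈ powersetCard T.card (insert i0 T), ∏ i ∈ J, X i)
      = coeff 0 q * (if insert j K ∈ powersetCard T.card (insert i0 T) then 1 else 0) := by
    intro j hj
    have hjK : j ∉ K := fun hc => (Finset.mem_sdiff.mp hj).2 (Finset.mem_insert_of_mem hc)
    exact coeff_mul_esum _ _ _ _ (by rw [Finset.card_insert_of_notMem hjK]; exact hcard)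
  rw [Finset.sum_congr rfl hstep, ← Finset.mul_sum, ← mul_sub]
  suffices hAB : (if insert i0 K ∈ powersetCard T.card (insert i0 T) then (1 : ℚ) else 0)
      - ∑ j ∈ univ \ insert i0 K,
          (if insert j K ∈ powersetCard T.card (insert i0 T) then (1 : ℚ) else 0) = 0 by
    rw [hAB, mul_zero]
  by_cases hKT : K ⊆ T
  · have hA : insert i0 K ∈ powersetCard T.card (insert i0 T) :=
      Finset.mem_powersetCard.mpr ⟨Finset.insert_subset_insert _ hKT, hcK⟩
    rw [if_pos hA, Finset.sum_boole]
    have hfil : (univ \ insert i0 K).filter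
        (fun j => insert j K ∈ powersetCard T.card (insert i0 T)) = T \ K := by
      ext j
      simp only [Finset.mem_filter, Finset.mem_sdiff, Finset.mem_univ, true_and,
        Finset.mem_insert, Finset.mem_powersetCard, not_or]
      constructor
      · rintro ⟨⟨hji0, hjK⟩, hsub, _⟩
        have hjmem : j ∈ insert i0 T := hsub (Finset.mem_insert_self _ _)
        rcases Finset.mem_insert.mp hjmem with h | h
        · exact absurd h hji0
        · exact ⟨h, hjK⟩
      · rintro ⟨hjT, hjK⟩
        have hji0 : j ≠ i0 := fun hc => hi0T (hc ▸ hjT)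
        refine ⟨⟨hji0, hjK⟩, ?_, ?_⟩
        · exact Finset.insert_subset (Finset.mem_insert_of_mem hjT)
            (hKT.trans (Finset.subset_insert _ _))
        · rw [Finset.card_insert_of_notMem hjK]; exact hcard
    have hone : (T \ K).card = 1 := by
      rw [Finset.card_sdiff_of_subset hKT]; omega
    rw [hfil, hone]
    norm_num
  · have hA : insert i0 K ∉ powersetCard T.card (insert i0 T) := by
      intro hc
      have hsub := (Finset.mem_powersetCard.mp hc).1
      exact hKT ((subset_insert_iff' hi0K).mp
        ((Finset.subset_insert _ _).trans hsub))
    rw [if_neg hA]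
    rw [Finset.sum_eq_zero (fun j hj => ?_)]
    · norm_num
    · rw [if_neg]
      intro hc
      have hsub := (Finset.mem_powersetCard.mp hc).1
      exact hKT ((subset_insert_iff' hi0K).mp
        ((Finset.subset_insert _ _).trans hsub))

end Stmt19Aux

open Stmt19Aux Nat

/-- From the proof of Theorem 6.1: description of the set Z⁺ of (n−1)-nilpotent
degree-one elements of ℬ⁺. -/
theorem stmt19 (n : ℕ) (hn : 3 ≤ n)
    (b : Ideal (MvPolynomial (Fin (2 * n)) ℚ))
    (hb : b = Ideal.span
      ({f | ∃ i : Fin (2 * n), f = X i ^ 2} ∪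
       {f | ∃ T : Finset (Fin (2 * n)), (⟨0, by omega⟩ : Fin (2 * n)) ∉ T ∧ T.card = n - 1 ∧
          f = esF (insert (⟨0, by omega⟩ : Fin (2 * n)) T) (n - 1)}))
    (a : Fin (2 * n) → ℚ) :
    (∑ i, C (a i) * X i) ^ (n - 1) ∈ b ↔
      ∀ K : Finset (Fin (2 * n)), (⟨0, by omega⟩ : Fin (2 * n)) ∉ K → K.card = n - 2 →
        (∏ k ∈ K, a k) *
          (a (⟨0, by omega⟩ : Fin (2 * n)) -
            ∑ j ∈ (Finset.univ.erase (⟨0, by omega⟩ : Fin (2 * n))) \ K, a j) = 0 := by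
  classical
  have h2n : 0 < 2 * n := by omega
  subst hb
  show (∑ i, C (a i) * X i) ^ (n - 1) ∈ Ideal.span
      ({f | ∃ i : Fin (2 * n), f = X i ^ 2} ∪
       {f | ∃ T : Finset (Fin (2 * n)), (⟨0, h2n⟩ : Fin (2 * n)) ∉ T ∧ T.card = n - 1 ∧
          f = esF (insert (⟨0, h2n⟩ : Fin (2 * n)) T) (n - 1)}) ↔
      ∀ K : Finset (Fin (2 * n)), (⟨0, h2n⟩ : Fin (2 * n)) ∉ K → K.card = n - 2 →
        (∏ k ∈ K, a k) *
          (a (⟨0, h2n⟩ : Fin (2 * n)) -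
            ∑ j ∈ (Finset.univ.erase (⟨0, h2n⟩ : Fin (2 * n))) \ K, a j) = 0
  set i0 : Fin (2 * n) := ⟨0, h2n⟩ with hi0def
  set gens : Set (MvPolynomial (Fin (2 * n)) ℚ) :=
      ({f | ∃ i : Fin (2 * n), f = X i ^ 2} ∪
       {f | ∃ T : Finset (Fin (2 * n)), i0 ∉ T ∧ T.card = n - 1 ∧
          f = esF (insert i0 T) (n - 1)}) with hgens
  set L : MvPolynomial (Fin (2 * n)) ℚ := ∑ i, C (a i) * X i with hLdef
  set SP : MvPolynomial (Fin (2 * n)) ℚ :=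
      ∑ S ∈ powersetCard (n - 1) univ, C (∏ i ∈ S, a i) * ∏ i ∈ S, X i with hSPdef
  have hIsqle : Isq (Fin (2 * n)) ≤ Ideal.span gens := by
    refine Ideal.span_mono ?_
    rw [hgens]
    exact Set.subset_union_left
  have hQ : L ^ (n - 1) - C ((n - 1)! : ℚ) * SP ∈ Ideal.span gens := hIsqle (key a (n - 1))
  constructor
  · -- forward direction
    intro hmem K hK0 hKc
    have hSPmem : C ((n - 1)! : ℚ) * SP ∈ Ideal.span gens := by
      have h := Ideal.sub_mem _ hmem hQ
      rwa [sub_sub_cancel] at h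
    -- Phi vanishes on the span
    have hvan : ∀ f ∈ Ideal.span gens, ∀ q, Phi i0 K (q * f) = 0 := by
      intro f hf
      refine Submodule.span_induction (p := fun x _ => ∀ q, Phi i0 K (q * x) = 0)
        ?_ ?_ ?_ ?_ hf
      · rintro x hx q
        rw [hgens] at hx
        rcases hx with ⟨i, rfl⟩ | ⟨T, hT0, hTc, rfl⟩
        · exact Phi_mul_Xsq i0 K q i
        · have hes : esF (insert i0 T) (n - 1)
              = ∑ J ∈ powersetCard T.card (insert i0 T), ∏ i ∈ J, X i := by
            rw [esF, hTc]
          rw [hes]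
          exact Phi_mul_esum i0 K q T hK0 hT0 (by rw [hKc, hTc]; omega)
      · intro q
        rw [mul_zero]
        exact Phi_zero i0 K
      · intro x y _ _ hpx hpy q
        rw [mul_add, Phi_add, hpx q, hpy q, add_zero]
      · intro r x _ hp q
        rw [smul_eq_mul, ← mul_assoc]
        exact hp (q * r)
    have h0 := hvan _ hSPmem 1
    rw [one_mul] at h0
    have hKins : (insert i0 K).card = n - 1 := by
      rw [Finset.card_insert_of_notMem hK0, hKc]; omega
    have hSPc : ∀ D : Finset (Fin (2 * n)), D.card = n - 1 →
        coeff (mexp D) (C ((n - 1)! : ℚ) * SP) = ((n - 1)! : ℚ) * ∏ i ∈ D, a i := by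
      intro D hD
      rw [hSPdef, coeff_C_mul, coeff_sigma, if_pos (Finset.mem_powersetCard_univ.mpr hD)]
    have hPhi : Phi i0 K (C ((n - 1)! : ℚ) * SP)
        = ((n - 1)! : ℚ) * (a i0 * ∏ k ∈ K, a k)
          - ∑ j ∈ univ \ insert i0 K, ((n - 1)! : ℚ) * (a j * ∏ k ∈ K, a k) := by
      rw [Phi, hSPc _ hKins, Finset.prod_insert hK0]
      congr 1
      refine Finset.sum_congr rfl fun j hj => ?_
      have hjK : j ∉ K := fun hc => (Finset.mem_sdiff.mp hj).2 (Finset.mem_insert_of_mem hc)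
      rw [hSPc _ (by rw [Finset.card_insert_of_notMem hjK, hKc]; omega),
        Finset.prod_insert hjK]
    rw [hPhi] at h0
    have hset : Finset.univ.erase i0 \ K = univ \ insert i0 K := by
      ext x
      simp only [Finset.mem_sdiff, Finset.mem_erase, Finset.mem_univ, true_and,
        Finset.mem_insert, not_or, and_true]
    rw [hset]
    have hsum : ∑ j ∈ univ \ insert i0 K, ((n - 1)! : ℚ) * (a j * ∏ k ∈ K, a k)
        = ((n - 1)! : ℚ) * ((∑ j ∈ univ \ insert i0 K, a j) * ∏ k ∈ K, a k) := by
      rw [Finset.sum_mul, Finset.mul_sum]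
    rw [hsum] at h0
    have hfac : ((n - 1)! : ℚ) ≠ 0 := by
      exact_mod_cast Nat.factorial_ne_zero (n - 1)
    have hkey2 : ((n - 1)! : ℚ) *
        ((∏ k ∈ K, a k) * (a i0 - ∑ j ∈ univ \ insert i0 K, a j)) = 0 := by
      linear_combination h0
    rcases mul_eq_zero.mp hkey2 with h | h
    · exact absurd h hfac
    · exact h
  · -- backward direction
    intro hcond
    have hdecomp : L ^ (n - 1)
        = (L ^ (n - 1) - C ((n - 1)! : ℚ) * SP) + C ((n - 1)! : ℚ) * SP := by ring
    rw [hdecomp]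
    refine Ideal.add_mem _ hQ (Ideal.mul_mem_left _ _ ?_)
    set U : Finset (Fin (2 * n)) := Finset.univ.erase i0 with hUdef
    have hi0U : i0 ∉ U := Finset.notMem_erase _ _
    have hsucc : n - 1 = (n - 2) + 1 := by omega
    have hEq : SP = ∑ T ∈ powersetCard (n - 1) U,
        C (∏ i ∈ T, a i) * esF (insert i0 T) (n - 1) := by
      have hinner : ∀ T ∈ powersetCard (n - 1) U,
          C (∏ i ∈ T, a i) * esF (insert i0 T) (n - 1)
            = C (∏ i ∈ T, a i) * ∏ i ∈ T, X i
              + ∑ K ∈ powersetCard (n - 2) T, C (∏ i ∈ T, a i) * ∏ i ∈ insert i0 K, X i := by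
        intro T hT
        obtain ⟨hTU, hTc⟩ := Finset.mem_powersetCard.mp hT
        have hi0T : i0 ∉ T := fun hc => (Finset.mem_erase.mp (hTU hc)).1 rfl
        have hdisj : Disjoint ({T} : Finset (Finset (Fin (2 * n))))
            ((powersetCard (n - 2) T).image (insert i0)) := by
          rw [Finset.disjoint_left]
          intro A hA hA'
          rw [Finset.mem_singleton] at hA
          obtain ⟨K, _, hAK⟩ := Finset.mem_image.mp hA'
          subst hA
          exact hi0T (hAK ▸ Finset.mem_insert_self i0 K)
        have himg : powersetCard (n - 1) (insert i0 T)
            = {T} ∪ (powersetCard (n - 2) T).image (insert i0) := by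
          rw [hsucc, Finset.powersetCard_succ_insert hi0T]
          congr 1
          rw [show (n - 2).succ = T.card by omega, Finset.powersetCard_self]
        have hinj : ∀ K ∈ powersetCard (n - 2) T, ∀ K' ∈ powersetCard (n - 2) T,
            insert i0 K = insert i0 K' → K = K' := by
          intro K hK K' hK' hKK'
          have hK0 : i0 ∉ K := fun hc => hi0T ((Finset.mem_powersetCard.mp hK).1 hc)
          have hK0' : i0 ∉ K' := fun hc => hi0T ((Finset.mem_powersetCard.mp hK').1 hc)
          rw [← Finset.erase_insert hK0, ← Finset.erase_insert hK0', hKK']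
        rw [esF, himg, Finset.sum_union hdisj, Finset.sum_singleton, mul_add]
        congr 1
        rw [Finset.mul_sum, Finset.sum_image hinj]
      rw [Finset.sum_congr rfl hinner, Finset.sum_add_distrib]
      have hswap : ∑ T ∈ powersetCard (n - 1) U, ∑ K ∈ powersetCard (n - 2) T,
          C (∏ i ∈ T, a i) * ∏ i ∈ insert i0 K, X i
        = ∑ K ∈ powersetCard (n - 2) U,
            ∑ T ∈ (powersetCard (n - 1) U).filter (fun T => K ⊆ T),
              C (∏ i ∈ T, a i) * ∏ i ∈ insert i0 K, X i := by
        refine Finset.sum_comm' ?_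
        intro T K
        simp only [Finset.mem_powersetCard, Finset.mem_filter]
        constructor
        · rintro ⟨⟨hTU, hTc⟩, hKT, hKc⟩
          exact ⟨⟨⟨hTU, hTc⟩, hKT⟩, hKT.trans hTU, hKc⟩
        · rintro ⟨⟨⟨hTU, hTc⟩, hKT⟩, hKU, hKc⟩
          exact ⟨⟨hTU, hTc⟩, hKT, hKc⟩
      have hinner2 : ∀ K ∈ powersetCard (n - 2) U,
          ∑ T ∈ (powersetCard (n - 1) U).filter (fun T => K ⊆ T),
              C (∏ i ∈ T, a i) * ∏ i ∈ insert i0 K, X i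
            = C (∏ i ∈ insert i0 K, a i) * ∏ i ∈ insert i0 K, X i := by
        intro K hK
        obtain ⟨hKU, hKc⟩ := Finset.mem_powersetCard.mp hK
        have hK0 : i0 ∉ K := fun hc => (Finset.mem_erase.mp (hKU hc)).1 rfl
        have hfil : (powersetCard (n - 1) U).filter (fun T => K ⊆ T)
            = (U \ K).image (fun j => insert j K) := by
          ext T
          simp only [Finset.mem_filter, Finset.mem_powersetCard, Finset.mem_image,
            Finset.mem_sdiff]
          constructor
          · rintro ⟨⟨hTU, hTc⟩, hKT⟩
            have hcard1 : (T \ K).card = 1 := by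
              rw [Finset.card_sdiff_of_subset hKT]; omega
            obtain ⟨j, hj⟩ := Finset.card_eq_one.mp hcard1
            have hjmem : j ∈ T \ K := hj ▸ Finset.mem_singleton_self j
            have hjT : j ∈ T := (Finset.mem_sdiff.mp hjmem).1
            have hjK : j ∉ K := (Finset.mem_sdiff.mp hjmem).2
            refine ⟨j, ⟨hTU hjT, hjK⟩, ?_⟩
            calc insert j K = {j} ∪ K := Finset.insert_eq _ _
              _ = T \ K ∪ K := by rw [hj]
              _ = K ∪ T \ K := Finset.union_comm _ _
              _ = T := Finset.union_sdiff_of_subset hKT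
          · rintro ⟨j, ⟨hjU, hjK⟩, rfl⟩
            refine ⟨⟨Finset.insert_subset_iff.mpr ⟨hjU, hKU⟩, ?_⟩, Finset.subset_insert _ _⟩
            rw [Finset.card_insert_of_notMem hjK, hKc]
            omega
        have hinj2 : ∀ j ∈ U \ K, ∀ j' ∈ U \ K, insert j K = insert j' K → j = j' := by
          intro j hj j' hj' hins
          have hjK : j ∉ K := (Finset.mem_sdiff.mp hj).2
          have hmem : j ∈ insert j' K := hins ▸ Finset.mem_insert_self j K
          rcases Finset.mem_insert.mp hmem with h | h
          · exact h
          · exact absurd h hjK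
        rw [hfil, Finset.sum_image hinj2, ← Finset.sum_mul, ← map_sum]
        congr 2
        have hstep : ∀ j ∈ U \ K, ∏ i ∈ insert j K, a i = a j * ∏ k ∈ K, a k :=
          fun j hj => Finset.prod_insert (Finset.mem_sdiff.mp hj).2
        rw [Finset.sum_congr rfl hstep, ← Finset.sum_mul, Finset.prod_insert hK0]
        have hc := hcond K hK0 hKc
        rw [hUdef]
        linear_combination -hc
      rw [hswap, Finset.sum_congr rfl hinner2]
      -- split the LHS
      have huniv : (univ : Finset (Fin (2 * n))) = insert i0 U :=
        (Finset.insert_erase (Finset.mem_univ i0)).symm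
      have hdisjU : Disjoint (powersetCard ((n - 2) + 1) U)
          ((powersetCard (n - 2) U).image (insert i0)) := by
        rw [Finset.disjoint_left]
        intro A hA hA'
        obtain ⟨K, _, hAK⟩ := Finset.mem_image.mp hA'
        have hi0A : i0 ∈ A := hAK ▸ Finset.mem_insert_self i0 K
        exact hi0U ((Finset.mem_powersetCard.mp hA).1 hi0A)
      have hinjU : ∀ K ∈ powersetCard (n - 2) U, ∀ K' ∈ powersetCard (n - 2) U,
          insert i0 K = insert i0 K' → K = K' := by
        intro K hK K' hK' hKK'
        have hK0 : i0 ∉ K := fun hc => hi0U ((Finset.mem_powersetCard.mp hK).1 hc)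
        have hK0' : i0 ∉ K' := fun hc => hi0U ((Finset.mem_powersetCard.mp hK').1 hc)
        rw [← Finset.erase_insert hK0, ← Finset.erase_insert hK0', hKK']
      rw [hSPdef, huniv, hsucc, Finset.powersetCard_succ_insert hi0U,
        Finset.sum_union hdisjU, Finset.sum_image hinjU]
    rw [hEq]
    refine Ideal.sum_mem _ fun T hT => Ideal.mul_mem_left _ _ (Ideal.subset_span ?_)
    obtain ⟨hTU, hTc⟩ := Finset.mem_powersetCard.mp hT
    have hi0T : i0 ∉ T := fun hc => (Finset.mem_erase.mp (hTU hc)).1 rfl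
    rw [hgens]
    exact Set.mem_union_right _ ⟨T, hi0T, hTc, rfl⟩

end
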